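/- Let E be a finite-dimensional real inner product space, let x ∈ E, let ψ : E → ℝ be differentiable at x, and let φ_1, …, φ_N : E → ℝ be functions differentiable at x such that ∑_{m=1}^N φ_m(y)² = 1 for all y in some neighborhood of x. Then ∑_{m=1}^N ‖∇(ψ·φ_m)(x)‖² = ‖∇ψ(x)‖² + ψ(x)² · ∑_{m=1}^N ‖∇φ_m(x)‖², where ∇ denotes the gradient. -/

import Mathlib

/-- Gradient identity for a partition of unity: if `∑ φ_m² ≡ 1` near
`x`, then `∑_m ‖∇(ψ φ_m)(x)‖² = ‖∇ψ(x)‖² + ψ(x)² ∑_m ‖∇φ_m(x)‖²`. -/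
theorem stmt_7 {E : Type*} [NormedAddCommGroup E] [InnerProductSpace ℝ E]
    [FiniteDimensional ℝ E] (x : E) (ψ : E → ℝ) (hψ : DifferentiableAt ℝ ψ x)
    (N : ℕ) (φ : Fin N → E → ℝ) (hφ : ∀ m, DifferentiableAt ℝ (φ m) x)
    (hsum : ∀ᶠ y in nhds x, ∑ m : Fin N, (φ m y) ^ 2 = 1) :
    ∑ m : Fin N, ‖gradient (fun y => ψ y * φ m y) x‖ ^ 2 =
      ‖gradient ψ x‖ ^ 2 + ψ x ^ 2 * ∑ m : Fin N, ‖gradient (φ m) x‖ ^ 2 := by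
  set gψ := gradient ψ x with hgψ
  set g : Fin N → E := fun m => gradient (φ m) x with hg
  -- product rule for gradients
  have hgrad : ∀ m, gradient (fun y => ψ y * φ m y) x = φ m x • gψ + ψ x • g m := by
    intro m
    simp only [gradient, hgψ, hg]
    rw [fderiv_fun_mul hψ (hφ m), map_add, map_smul, map_smul]
    abel
  -- the sum ∑ φ_m(x) • g m vanishes
  have hφsq : ∀ m, fderiv ℝ (fun y => φ m y ^ 2) x = (2 * φ m x) • fderiv ℝ (φ m) x := by
    intro m
    have : (fun y => φ m y ^ 2) = fun y => φ m y * φ m y := by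
      funext y; ring
    rw [this, fderiv_fun_mul (hφ m) (hφ m)]
    rw [two_mul, add_smul]
  have hfd0 : fderiv ℝ (fun y => ∑ m : Fin N, φ m y ^ 2) x = 0 := by
    have heq : (fun y => ∑ m : Fin N, φ m y ^ 2) =ᶠ[nhds x] fun _ => (1 : ℝ) := hsum
    rw [heq.fderiv_eq, fderiv_fun_const]
    rfl
  have hfdsum : ∑ m : Fin N, (2 * φ m x) • fderiv ℝ (φ m) x = 0 := by
    have := fderiv_fun_sum (𝕜 := ℝ) (x := x)
      (A := fun m y => φ m y ^ 2) (u := Finset.univ)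
      (fun m _ => ((hφ m).pow 2))
    rw [hfd0] at this
    rw [← Finset.sum_congr rfl fun m _ => (hφsq m)]
    exact this.symm
  have h0 : ∑ m : Fin N, φ m x • g m = 0 := by
    have h2 : ∑ m : Fin N, (2 * φ m x) • g m = 0 := by
      have := congrArg (InnerProductSpace.toDual ℝ E).symm hfdsum
      simpa [gradient, map_sum, map_smul, hg] using this
    have : (2:ℝ) • ∑ m : Fin N, φ m x • g m = 0 := by
      rw [Finset.smul_sum]
      simpa [smul_smul] using h2
    simpa using (smul_eq_zero.mp this).resolve_left (by norm_num)
  have hsx : ∑ m : Fin N, φ m x ^ 2 = 1 := hsum.self_of_nhds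
  -- expand the norms
  have hexp : ∀ m, ‖gradient (fun y => ψ y * φ m y) x‖ ^ 2 =
      φ m x ^ 2 * ‖gψ‖ ^ 2 + 2 * ψ x * (φ m x * inner ℝ gψ (g m)) + ψ x ^ 2 * ‖g m‖ ^ 2 := by
    intro m
    rw [hgrad m, norm_add_sq_real]
    rw [norm_smul, norm_smul, real_inner_smul_left, real_inner_smul_right]
    simp [mul_pow, sq_abs]
    ring
  rw [Finset.sum_congr rfl fun m _ => hexp m]
  rw [Finset.sum_add_distrib, Finset.sum_add_distrib]
  have hA : ∑ m : Fin N, φ m x ^ 2 * ‖gψ‖ ^ 2 = ‖gψ‖ ^ 2 := by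
    rw [← Finset.sum_mul, hsx, one_mul]
  have hB : ∑ m : Fin N, 2 * ψ x * (φ m x * inner ℝ gψ (g m)) = 0 := by
    rw [← Finset.mul_sum]
    have : ∑ m : Fin N, φ m x * inner ℝ gψ (g m) = inner ℝ gψ (∑ m : Fin N, φ m x • g m) := by
      rw [inner_sum]
      exact Finset.sum_congr rfl fun m _ => (real_inner_smul_right _ _ _).symm
    rw [this, h0, inner_zero_right, mul_zero]
  rw [hA, hB, ← Finset.mul_sum]
  ring
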